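/- If A|H logically implies B|K in the sense of Goodman–Nguyen (A|H ⊑ B|K), then ⟦(A|H)∧(B|K)⟧(ω) = ⟦A|H⟧(ω) for every ω ∈ Ω; in particular, the prevision z of the conjunction equals P(A|H). (Here P(H) > 0 and P(K) > 0.) -/

import Mathlib

open MeasureTheory Set
open scoped Classical

noncomputable section

variable {Ω : Type*} [MeasurableSpace Ω]

/-- Indicator (with values in `ℝ`) of a set. -/
def ind (A : Set Ω) : Ω → ℝ := A.indicator 1

/-- Conditional probability `P(A|H) = P(A ∩ H)/P(H)`. -/
def condProb (P : Measure Ω) (A H : Set Ω) : ℝ :=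
  (P (A ∩ H)).toReal / (P H).toReal

/-- The (indicator of the) conditional event `A|H`,
`⟦A|H⟧ = 1_{A∩H} + P(A|H)·1_{Hᶜ}`. -/
def condEvent (P : Measure Ω) (A H : Set Ω) : Ω → ℝ :=
  fun ω => ind (A ∩ H) ω + condProb P A H * ind Hᶜ ω

/-- The prevision `z` of the conjunction `(A|H) ∧ (B|K)`:
`z = E[min(⟦A|H⟧, ⟦B|K⟧)·1_{H∪K}]/P(H∪K)`. -/
def conjPrev (P : Measure Ω) (A H B K : Set Ω) : ℝ :=
  (∫ ω, min (condEvent P A H ω) (condEvent P B K ω) * ind (H ∪ K) ω ∂P) /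
    (P (H ∪ K)).toReal

/-- The conjunction `⟦(A|H) ∧ (B|K)⟧ = min(⟦A|H⟧, ⟦B|K⟧)·1_{H∪K} + z·1_{(H∪K)ᶜ}`. -/
def conjCE (P : Measure Ω) (A H B K : Set Ω) : Ω → ℝ :=
  fun ω => min (condEvent P A H ω) (condEvent P B K ω) * ind (H ∪ K) ω
    + conjPrev P A H B K * ind (H ∪ K)ᶜ ω

/-- The iterated conditional `⟦(B|K)|(A|H)⟧ = ⟦(A|H)∧(B|K)⟧ + μ·(1 − ⟦A|H⟧)`,
with `μ = z / P(A|H)`. -/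
def iterCond (P : Measure Ω) (A H B K : Set Ω) : Ω → ℝ :=
  fun ω => conjCE P A H B K ω +
    (conjPrev P A H B K / condProb P A H) * (1 - condEvent P A H ω)

/-- Goodman–Nguyen logical implication between conditional events:
`A|H ⊑ B|K` iff `A∩H ⊆ B∩K` and `Bᶜ∩K ⊆ Aᶜ∩H`. -/
def GNle (A H B K : Set Ω) : Prop := A ∩ H ⊆ B ∩ K ∧ Bᶜ ∩ K ⊆ Aᶜ ∩ H

lemma ind_of_mem {A : Set Ω} {ω : Ω} (h : ω ∈ A) : ind A ω = 1 := by
  simp [ind, Set.indicator_of_mem h]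

lemma ind_of_not_mem {A : Set Ω} {ω : Ω} (h : ω ∉ A) : ind A ω = 0 := by
  simp [ind, Set.indicator_of_notMem h]

lemma ind_nonneg (A : Set Ω) (ω : Ω) : 0 ≤ ind A ω := by
  classical
  by_cases h : ω ∈ A
  · rw [ind_of_mem h]; norm_num
  · rw [ind_of_not_mem h]

lemma condProb_nonneg (P : Measure Ω) (A H : Set Ω) : 0 ≤ condProb P A H :=
  div_nonneg ENNReal.toReal_nonneg ENNReal.toReal_nonneg

lemma condEvent_nonneg (P : Measure Ω) (A H : Set Ω) (ω : Ω) :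
    0 ≤ condEvent P A H ω :=
  add_nonneg (ind_nonneg _ _) (mul_nonneg (condProb_nonneg _ _ _) (ind_nonneg _ _))

lemma integral_ind (P : Measure Ω) [IsProbabilityMeasure P] {A : Set Ω}
    (hA : MeasurableSet A) : ∫ ω, ind A ω ∂P = (P A).toReal := by
  exact MeasureTheory.integral_indicator_one (μ := P) hA

lemma integrable_ind (P : Measure Ω) [IsProbabilityMeasure P] {A : Set Ω}
    (hA : MeasurableSet A) : Integrable (ind A) P :=
  (integrable_const (1 : ℝ)).indicator hA

/-- If `A|H ⊑ B|K` (Goodman–Nguyen), then `⟦(A|H)∧(B|K)⟧ = ⟦A|H⟧` pointwise;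
in particular the prevision of the conjunction equals `P(A|H)`. -/
theorem conj_of_GNle (P : Measure Ω) [IsProbabilityMeasure P]
    (A H B K : Set Ω)
    (hAm : MeasurableSet A) (hHm : MeasurableSet H)
    (hBm : MeasurableSet B) (hKm : MeasurableSet K)
    (hH : 0 < P H) (hK : 0 < P K)
    (hGN : GNle A H B K) :
    (∀ ω, conjCE P A H B K ω = condEvent P A H ω) ∧
      conjPrev P A H B K = condProb P A H := by
  obtain ⟨h1, h2⟩ := hGN
  set p := condProb P A H with hpdef
  have hHne : P H ≠ 0 := hH.ne'
  have hHfin : P H ≠ ⊤ := measure_ne_top P H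
  have hHpos : 0 < (P H).toReal := ENNReal.toReal_pos hHne hHfin
  have hp0 : 0 ≤ p := condProb_nonneg P A H
  have hp1 : p ≤ 1 := by
    rw [hpdef, condProb, div_le_one hHpos]
    exact ENNReal.toReal_mono hHfin (measure_mono inter_subset_right)
  -- pointwise: min is the first argument on H ∪ K
  have hmin : ∀ ω ∈ H ∪ K,
      min (condEvent P A H ω) (condEvent P B K ω) = condEvent P A H ω := by
    intro ω hω
    refine min_eq_left ?_
    by_cases hωH : ω ∈ H
    · by_cases hωA : ω ∈ A
      · have hBK : ω ∈ B ∩ K := h1 ⟨hωA, hωH⟩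
        simp [condEvent, ind_of_mem (show ω ∈ A ∩ H from ⟨hωA, hωH⟩),
          ind_of_mem hBK, ind_of_not_mem (show ω ∉ Hᶜ from fun h => h hωH)]
        nlinarith [condProb_nonneg P B K, ind_nonneg Kᶜ ω]
      · have : condEvent P A H ω = 0 := by
          simp [condEvent, ind_of_not_mem (show ω ∉ A ∩ H from fun h => hωA h.1),
            ind_of_not_mem (show ω ∉ Hᶜ from fun h => h hωH)]
        rw [this]; exact condEvent_nonneg P B K ω
    · have hωK : ω ∈ K := hω.resolve_left hωH
      have hωB : ω ∈ B := by
        by_contra hωB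
        exact hωH (h2 ⟨hωB, hωK⟩).2
      have hX : condEvent P A H ω = p := by
        simp [condEvent, ind_of_not_mem (show ω ∉ A ∩ H from fun h => hωH h.2),
          ind_of_mem (show ω ∈ Hᶜ from hωH), hpdef]
      have hY : condEvent P B K ω = 1 := by
        simp [condEvent, ind_of_mem (show ω ∈ B ∩ K from ⟨hωB, hωK⟩),
          ind_of_not_mem (show ω ∉ Kᶜ from fun h => h hωK)]
      rw [hX, hY]; exact hp1
  -- rewrite the integrand as a sum of indicators
  have hpt : ∀ ω, min (condEvent P A H ω) (condEvent P B K ω) * ind (H ∪ K) ω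
      = ind (A ∩ H) ω + p * ind (Hᶜ ∩ K) ω := by
    intro ω
    by_cases hω : ω ∈ H ∪ K
    · rw [hmin ω hω, ind_of_mem hω, mul_one, condEvent]
      by_cases hωH : ω ∈ H
      · simp [ind_of_not_mem (show ω ∉ Hᶜ from fun h => h hωH),
          ind_of_not_mem (show ω ∉ Hᶜ ∩ K from fun h => h.1 hωH)]
      · have hωK : ω ∈ K := hω.resolve_left hωH
        simp [ind_of_mem (show ω ∈ Hᶜ from hωH),
          ind_of_mem (show ω ∈ Hᶜ ∩ K from ⟨hωH, hωK⟩), hpdef]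
    · rw [ind_of_not_mem hω,
        ind_of_not_mem (show ω ∉ A ∩ H from fun h => hω (Or.inl h.2)),
        ind_of_not_mem (show ω ∉ Hᶜ ∩ K from fun h => hω (Or.inr h.2))]
      ring
  have hint : (∫ ω, min (condEvent P A H ω) (condEvent P B K ω) * ind (H ∪ K) ω ∂P)
      = (P (A ∩ H)).toReal + p * (P (Hᶜ ∩ K)).toReal := by
    have : (∫ ω, min (condEvent P A H ω) (condEvent P B K ω) * ind (H ∪ K) ω ∂P)
        = ∫ ω, (ind (A ∩ H) ω + p * ind (Hᶜ ∩ K) ω) ∂P := by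
      exact integral_congr_ae (Filter.Eventually.of_forall hpt)
    rw [this, integral_add (integrable_ind P (hAm.inter hHm))
      ((integrable_ind P (hHm.compl.inter hKm)).const_mul p),
      integral_ind P (hAm.inter hHm), integral_const_mul,
      integral_ind P (hHm.compl.inter hKm)]
  -- the measure decomposition
  have hdecomp : (P (H ∪ K)).toReal = (P H).toReal + (P (Hᶜ ∩ K)).toReal := by
    have hunion : H ∪ Hᶜ ∩ K = H ∪ K := by
      ext ω; by_cases h : ω ∈ H <;> simp [h]
    have hdisj : Disjoint H (Hᶜ ∩ K) :=
      Set.disjoint_left.mpr fun ω hω h' => h'.1 hω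
    rw [← hunion, measure_union hdisj (hHm.compl.inter hKm),
      ENNReal.toReal_add hHfin (measure_ne_top _ _)]
  have hpH : p * (P H).toReal = (P (A ∩ H)).toReal := by
    rw [hpdef, condProb, div_mul_cancel₀ _ hHpos.ne']
  have hHKpos : 0 < (P (H ∪ K)).toReal := by
    rw [hdecomp]
    have := ENNReal.toReal_nonneg (a := P (Hᶜ ∩ K))
    linarith
  have hz : conjPrev P A H B K = p := by
    rw [conjPrev, hint, ← hpH, hdecomp]
    field_simp
  refine ⟨fun ω => ?_, hz⟩
  rw [conjCE, hz]
  by_cases hω : ω ∈ H ∪ K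
  · rw [hmin ω hω, ind_of_mem hω, ind_of_not_mem (show ω ∉ (H ∪ K)ᶜ from fun h => h hω)]
    ring
  · have hX : condEvent P A H ω = p := by
      simp [condEvent, ind_of_not_mem (show ω ∉ A ∩ H from fun h => hω (Or.inl h.2)),
        ind_of_mem (show ω ∈ (H : Set Ω)ᶜ from fun h => hω (Or.inl h)), hpdef]
    rw [ind_of_not_mem hω, ind_of_mem (show ω ∈ (H ∪ K)ᶜ from hω), hX]
    ring

end
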